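/- For all real t with 0 < t ≤ 1 and all v with 0 ≤ v ≤ 1, we have 1 + (v·(1-v)·(t-1)²/2)·((t+1)/2)^(-v-1) ≤ ((1-v) + v·t)/t^v ≤ 1 + (v·(1-v)·(t-1)²/2)·t^(-v-1). -/

import Mathlib

open Real Set

private lemma hdA (v : ℝ) {x : ℝ} (hx : 0 < x) :
    HasDerivAt (fun y : ℝ => ((1 - v) + v * y) * y ^ (-v))
      (v * (1 - v) * (x - 1) * x ^ (-v - 1)) x := by
  have h1 : HasDerivAt (fun y : ℝ => (1 - v) + v * y) v x := by
    simpa using ((hasDerivAt_id x).const_mul v).const_add (1 - v)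
  have h2 : HasDerivAt (fun y : ℝ => y ^ (-v)) (-v * x ^ (-v - 1)) x :=
    Real.hasDerivAt_rpow_const (Or.inl hx.ne')
  have h := h1.mul h2
  refine h.congr_deriv ?_
  have hx1 : x ^ (-v) = x ^ (-v - 1) * x := by
    rw [← Real.rpow_add_one hx.ne' (-v - 1)]
    ring_nf
  rw [hx1]; ring

private lemma hdm {x : ℝ} : HasDerivAt (fun y : ℝ => (y + 1) / 2) (1 / 2 : ℝ) x := by
  simpa using ((hasDerivAt_id x).add_const 1).div_const 2

private lemma hdsq {x : ℝ} : HasDerivAt (fun y : ℝ => (1 - y) ^ 2) (2 * (1 - x) ^ 1 * (-1)) x :=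
  ((hasDerivAt_id x).const_sub 1).pow 2

private lemma hdB (v : ℝ) {x : ℝ} (hx : -1 < x) :
    HasDerivAt (fun y : ℝ => (1 - y) ^ 2 * ((y + 1) / 2) ^ (-v - 1))
      (2 * (1 - x) ^ 1 * (-1) * ((x + 1) / 2) ^ (-v - 1)
        + (1 - x) ^ 2 * ((-v - 1) * ((x + 1) / 2) ^ (-v - 1 - 1) * (1 / 2))) x := by
  have hm : (0:ℝ) < (x + 1) / 2 := by linarith
  have hout := Real.hasDerivAt_rpow_const (x := (x + 1) / 2) (p := -v - 1) (Or.inl hm.ne')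
  have h4 : HasDerivAt (fun y : ℝ => ((y + 1) / 2) ^ (-v - 1))
      ((-v - 1) * ((x + 1) / 2) ^ (-v - 1 - 1) * (1 / 2)) x := by
    have hc := hout.comp x hdm
    exact hc
  exact hdsq.mul h4

private lemma hdC (v : ℝ) {x : ℝ} (hx : 0 < x) :
    HasDerivAt (fun y : ℝ => (1 - y) ^ 2 * y ^ (-v - 1))
      (2 * (1 - x) ^ 1 * (-1) * x ^ (-v - 1)
        + (1 - x) ^ 2 * ((-v - 1) * x ^ (-v - 1 - 1))) x :=
  hdsq.mul (Real.hasDerivAt_rpow_const (Or.inl hx.ne'))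

set_option maxHeartbeats 1000000 in
theorem stmt7 (t v : ℝ) (ht0 : 0 < t) (ht1 : t ≤ 1) (hv0 : 0 ≤ v) (hv1 : v ≤ 1) :
    1 + (v * (1 - v) * (t - 1) ^ 2 / 2) * ((t + 1) / 2) ^ (-v - 1) ≤ ((1 - v) + v * t) / t ^ v ∧
      ((1 - v) + v * t) / t ^ v ≤ 1 + (v * (1 - v) * (t - 1) ^ 2 / 2) * t ^ (-v - 1) := by
  have hdivt : ((1 - v) + v * t) / t ^ v = ((1 - v) + v * t) * t ^ (-v) := by
    rw [Real.rpow_neg ht0.le]; ring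
  have h1v : (0:ℝ) ≤ 1 - v := by linarith
  -- lower bound
  constructor
  · set f : ℝ → ℝ := fun y =>
      ((1 - v) + v * y) * y ^ (-v)
        - v * (1 - v) / 2 * ((1 - y) ^ 2 * ((y + 1) / 2) ^ (-v - 1)) with hf
    have hd : ∀ x : ℝ, 0 < x →
        HasDerivAt f
          (v * (1 - v) * (x - 1) * x ^ (-v - 1)
            - v * (1 - v) / 2 * (2 * (1 - x) ^ 1 * (-1) * ((x + 1) / 2) ^ (-v - 1)
              + (1 - x) ^ 2 * ((-v - 1) * ((x + 1) / 2) ^ (-v - 1 - 1) * (1 / 2)))) x := by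
      intro x hx
      exact (hdA v hx).sub ((hdB v (by linarith)).const_mul (v * (1 - v) / 2))
    have hderiv_nonpos : ∀ x ∈ Ioo t 1, deriv f x ≤ 0 := by
      intro x hx
      have hx0 : 0 < x := lt_trans ht0 hx.1
      have hx1 : x < 1 := hx.2
      rw [(hd x hx0).deriv]
      set m : ℝ := (x + 1) / 2 with hmdef
      have hm : 0 < m := by rw [hmdef]; linarith
      have hxm : x ≤ m := by rw [hmdef]; linarith
      set X : ℝ := x ^ (v + 1) with hX
      set M : ℝ := m ^ (v + 1) with hM
      have hXpos : 0 < X := Real.rpow_pos_of_pos hx0 _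
      have hMpos : 0 < M := Real.rpow_pos_of_pos hm _
      have hXM : X ≤ M := Real.rpow_le_rpow hx0.le hxm (by linarith)
      have hxinv : x ^ (-v - 1) = X⁻¹ := by
        rw [hX, show (-v - 1 : ℝ) = -(v + 1) by ring, Real.rpow_neg hx0.le]
      have hminv : m ^ (-v - 1) = M⁻¹ := by
        rw [hM, show (-v - 1 : ℝ) = -(v + 1) by ring, Real.rpow_neg hm.le]
      have hm2 : m ^ (-v - 1 - 1) = (M * m)⁻¹ := by
        rw [Real.rpow_sub_one hm.ne', hminv]
        field_simp
      -- Bernoulli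
      have hs : (0:ℝ) ≤ (1 - x) / (2 * x) := div_nonneg (by linarith) (by linarith)
      have hb := one_add_mul_self_le_rpow_one_add (s := (1 - x) / (2 * x))
        (by linarith) (p := v + 1) (by linarith)
      have h1x : 1 + (1 - x) / (2 * x) = m / x := by
        rw [hmdef]; field_simp; ring
      rw [h1x, Real.div_rpow hm.le hx0.le, ← hM, ← hX] at hb
      -- hb : 1 + (v+1) * ((1-x)/(2*x)) ≤ M / X
      have hb' : X * (2 * x + (v + 1) * (1 - x)) ≤ 2 * x * M := by
        have h2 : X * (1 + (v + 1) * ((1 - x) / (2 * x))) ≤ M := by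
          calc X * (1 + (v + 1) * ((1 - x) / (2 * x))) ≤ X * (M / X) :=
                mul_le_mul_of_nonneg_left hb hXpos.le
            _ = M := by field_simp
        have h3 := mul_le_mul_of_nonneg_right h2 (by linarith : (0:ℝ) ≤ 2 * x)
        calc X * (2 * x + (v + 1) * (1 - x))
            = X * (1 + (v + 1) * ((1 - x) / (2 * x))) * (2 * x) := by
              field_simp
          _ ≤ M * (2 * x) := h3
          _ = 2 * x * M := by ring
      have hkey2 : X * (4 * m + (v + 1) * (1 - x)) ≤ 4 * m * M := by
        have hm4 : 4 * m = 2 * x + 2 := by rw [hmdef]; ring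
        nlinarith [hb', hXM, hMpos]
      have key : m ^ (-v - 1) + (v + 1) * (1 - x) / 4 * m ^ (-v - 1 - 1) ≤ x ^ (-v - 1) := by
        rw [hminv, hm2, hxinv]
        rw [show M⁻¹ + (v + 1) * (1 - x) / 4 * (M * m)⁻¹
            = (4 * m + (v + 1) * (1 - x)) / (4 * (m * M)) by field_simp]
        rw [show X⁻¹ = 1 / X by simp]
        rw [div_le_div_iff₀ (by positivity) hXpos]
        nlinarith [hkey2]
      have hfac : (0:ℝ) ≤ v * (1 - v) * (1 - x) := by
        apply mul_nonneg (mul_nonneg hv0 h1v); linarith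
      nlinarith [mul_nonneg hfac (sub_nonneg.2 key)]
    have hant : AntitoneOn f (Icc t 1) := by
      apply antitoneOn_of_deriv_nonpos (convex_Icc t 1)
      · intro x hx
        exact ((hd x (lt_of_lt_of_le ht0 hx.1)).differentiableAt).continuousAt.continuousWithinAt
      · intro x hx
        rw [interior_Icc] at hx
        exact ((hd x (lt_trans ht0 hx.1)).differentiableAt).differentiableWithinAt
      · intro x hx
        rw [interior_Icc] at hx
        exact hderiv_nonpos x hx
    have h1 : f 1 ≤ f t := hant ⟨le_rfl, ht1⟩ ⟨ht1, le_rfl⟩ ht1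
    have hf1 : f 1 = 1 := by
      rw [hf]; norm_num
    rw [hf1, hf] at h1
    simp only at h1
    rw [hdivt]
    nlinarith [h1]
  · set f : ℝ → ℝ := fun y =>
      v * (1 - v) / 2 * ((1 - y) ^ 2 * y ^ (-v - 1)) - ((1 - v) + v * y) * y ^ (-v) with hf
    have hd : ∀ x : ℝ, 0 < x →
        HasDerivAt f
          (v * (1 - v) / 2 * (2 * (1 - x) ^ 1 * (-1) * x ^ (-v - 1)
              + (1 - x) ^ 2 * ((-v - 1) * x ^ (-v - 1 - 1)))
            - v * (1 - v) * (x - 1) * x ^ (-v - 1)) x := by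
      intro x hx
      exact ((hdC v hx).const_mul (v * (1 - v) / 2)).sub (hdA v hx)
    have hderiv_nonpos : ∀ x ∈ Ioo t 1, deriv f x ≤ 0 := by
      intro x hx
      have hx0 : 0 < x := lt_trans ht0 hx.1
      rw [(hd x hx0).deriv]
      have hpow : (0:ℝ) ≤ x ^ (-v - 1 - 1) := Real.rpow_nonneg hx0.le _
      have hfac : (0:ℝ) ≤ v * (1 - v) * (v + 1) * (1 - x) ^ 2 / 2 := by
        have := sq_nonneg (1 - x)
        have h2 : (0:ℝ) ≤ v * (1 - v) * (v + 1) :=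
          mul_nonneg (mul_nonneg hv0 h1v) (by linarith)
        positivity
      nlinarith [mul_nonneg hfac hpow]
    have hant : AntitoneOn f (Icc t 1) := by
      apply antitoneOn_of_deriv_nonpos (convex_Icc t 1)
      · intro x hx
        exact ((hd x (lt_of_lt_of_le ht0 hx.1)).differentiableAt).continuousAt.continuousWithinAt
      · intro x hx
        rw [interior_Icc] at hx
        exact ((hd x (lt_trans ht0 hx.1)).differentiableAt).differentiableWithinAt
      · intro x hx
        rw [interior_Icc] at hx
        exact hderiv_nonpos x hx
    have h1 : f 1 ≤ f t := hant ⟨le_rfl, ht1⟩ ⟨ht1, le_rfl⟩ ht1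
    have hf1 : f 1 = -1 := by
      rw [hf]; norm_num
    rw [hf1, hf] at h1
    simp only at h1
    rw [hdivt]
    nlinarith [h1]
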